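/- Let F be a field and k, s, n1, n2 positive integers with s ≤ k. Let U11 ∈ F^{k×n1} with rank(U11) = k, U22 ∈ F^{k×n2} with rank(U22) = k, Q21 ∈ F^{k×n1} with rank(Q21) ≤ k − s, and Q12 ∈ F^{k×n2} arbitrary. Then the 2k×(n1+n2) block matrix with first block row (U11 | Q12) and second block row (Q21 | U22) has rank at least k + s. Equivalently, dim( rowspace(U11 | Q12) + rowspace(Q21 | U22) ) ≥ k + s. -/

import Mathlib

open Module

/-- The row space of a matrix: the subspace spanned by its rows. -/
noncomputable def rowSpace {F : Type*} [Field F] {k n : ℕ} (M : Matrix (Fin k) (Fin n) F) :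
    Submodule F (Fin n → F) := LinearMap.range M.vecMulLinear

/-- Horizontal concatenation `(A | B)` of two matrices with the same number of rows. -/
def hcat {F : Type*} {k n1 n2 : ℕ} (A : Matrix (Fin k) (Fin n1) F)
    (B : Matrix (Fin k) (Fin n2) F) : Matrix (Fin k) (Fin (n1 + n2)) F :=
  Matrix.of fun i => Fin.append (A i) (B i)

/-- Vertical concatenation of two matrices with the same number of columns. -/
def vcat {F : Type*} {k1 k2 n : ℕ} (A : Matrix (Fin k1) (Fin n) F)
    (B : Matrix (Fin k2) (Fin n) F) : Matrix (Fin (k1 + k2)) (Fin n) F :=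
  Matrix.of fun i j => Fin.append (fun i1 => A i1 j) (fun i2 => B i2 j) i

lemma rank_eq_finrank_rowSpace {F : Type*} [Field F] {k n : ℕ}
    (M : Matrix (Fin k) (Fin n) F) : M.rank = Module.finrank F (rowSpace M) := by
  rw [Matrix.rank_eq_finrank_span_row, rowSpace, range_vecMulLinear]

lemma rowSpace_vcat {F : Type*} [Field F] {k1 k2 n : ℕ} (A : Matrix (Fin k1) (Fin n) F)
    (B : Matrix (Fin k2) (Fin n) F) :
    rowSpace (vcat A B) = rowSpace A ⊔ rowSpace B := by
  simp only [rowSpace, range_vecMulLinear]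
  rw [← Submodule.span_union]
  congr 1
  ext v
  constructor
  · rintro ⟨i, rfl⟩
    refine Fin.addCases (fun i1 => ?_) (fun i2 => ?_) i
    · exact Or.inl ⟨i1, by funext j; simp [vcat, Fin.append_left]⟩
    · exact Or.inr ⟨i2, by funext j; simp [vcat, Fin.append_right]⟩
  · rintro (⟨i, rfl⟩ | ⟨i, rfl⟩)
    · exact ⟨Fin.castAdd k2 i, by funext j; simp [vcat, Fin.append_left]⟩
    · exact ⟨Fin.natAdd k1 i, by funext j; simp [vcat, Fin.append_right]⟩

lemma vecMul_hcat_left {F : Type*} [Field F] {k n1 n2 : ℕ} (A : Matrix (Fin k) (Fin n1) F)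
    (B : Matrix (Fin k) (Fin n2) F) (x : Fin k → F) (j : Fin n1) :
    Matrix.vecMul x (hcat A B) (Fin.castAdd n2 j) = Matrix.vecMul x A j := by
  simp [Matrix.vecMul, dotProduct, hcat, Fin.append_left]

lemma vecMul_hcat_right {F : Type*} [Field F] {k n1 n2 : ℕ} (A : Matrix (Fin k) (Fin n1) F)
    (B : Matrix (Fin k) (Fin n2) F) (x : Fin k → F) (j : Fin n2) :
    Matrix.vecMul x (hcat A B) (Fin.natAdd n1 j) = Matrix.vecMul x B j := by
  simp [Matrix.vecMul, dotProduct, hcat, Fin.append_right]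

set_option maxHeartbeats 1000000 in
set_option synthInstance.maxHeartbeats 400000 in
theorem block_matrix_rank_lower_bound (F : Type*) [Field F]
    (k s n1 n2 : ℕ) (hk : 0 < k) (hs : 0 < s) (hn1 : 0 < n1) (hn2 : 0 < n2)
    (hsk : s ≤ k)
    (U11 : Matrix (Fin k) (Fin n1) F) (hU11 : U11.rank = k)
    (U22 : Matrix (Fin k) (Fin n2) F) (hU22 : U22.rank = k)
    (Q21 : Matrix (Fin k) (Fin n1) F) (hQ21 : Q21.rank ≤ k - s)
    (Q12 : Matrix (Fin k) (Fin n2) F) :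
    k + s ≤ (vcat (hcat U11 Q12) (hcat Q21 U22)).rank ∧
    k + s ≤ finrank F ↥(rowSpace (hcat U11 Q12) ⊔ rowSpace (hcat Q21 U22)) := by
  set A := hcat U11 Q12 with hA
  set B := hcat Q21 U22 with hB
  set W : Submodule F (Fin (n1 + n2) → F) := rowSpace A ⊔ rowSpace B with hW
  have main : k + s ≤ finrank F W := by
    -- projections
    set π1 : (Fin (n1 + n2) → F) →ₗ[F] (Fin n1 → F) :=
      LinearMap.funLeft F F (Fin.castAdd n2) with hπ1
    set π2 : (Fin (n1 + n2) → F) →ₗ[F] (Fin n2 → F) :=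
      LinearMap.funLeft F F (Fin.natAdd n1) with hπ2
    have hπ1A : ∀ x : Fin k → F, π1 (Matrix.vecMul x A) = Matrix.vecMul x U11 := by
      intro x; funext j; exact vecMul_hcat_left U11 Q12 x j
    have hπ1B : ∀ x : Fin k → F, π1 (Matrix.vecMul x B) = Matrix.vecMul x Q21 := by
      intro x; funext j; exact vecMul_hcat_left Q21 U22 x j
    have hπ2B : ∀ x : Fin k → F, π2 (Matrix.vecMul x B) = Matrix.vecMul x U22 := by
      intro x; funext j; exact vecMul_hcat_right Q21 U22 x j
    -- rank-nullity for the restriction of π1 to W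
    have hsplit := LinearMap.finrank_range_add_finrank_ker (π1.comp W.subtype)
    -- lower bound on range finrank : ≥ k
    have hrange : k ≤ finrank F (LinearMap.range (π1.comp W.subtype)) := by
      have hle : rowSpace U11 ≤ LinearMap.range (π1.comp W.subtype) := by
        rintro v ⟨x, rfl⟩
        refine ⟨⟨Matrix.vecMul x A, Submodule.mem_sup_left ⟨x, rfl⟩⟩, ?_⟩
        simpa using hπ1A x
      calc k = finrank F (rowSpace U11) := by rw [← rank_eq_finrank_rowSpace, hU11]
        _ ≤ _ := Submodule.finrank_mono hle
      -- membership fix below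
    -- lower bound on kernel finrank : ≥ s
    have hker : s ≤ finrank F (LinearMap.ker (π1.comp W.subtype)) := by
      set K := LinearMap.ker Q21.vecMulLinear with hK
      have hKdim : s ≤ finrank F K := by
        have h1 := LinearMap.finrank_range_add_finrank_ker Q21.vecMulLinear
        have h2 : finrank F (LinearMap.range Q21.vecMulLinear) ≤ k - s := by
          rw [← rowSpace, ← rank_eq_finrank_rowSpace]; exact hQ21
        rw [← hK] at h1
        have h3 : finrank F (Fin k → F) = k := by simp
        omega
      -- injective map from K into the kernel
      have hmem : ∀ x : K, Matrix.vecMul (x : Fin k → F) B ∈ W := fun x =>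
        Submodule.mem_sup_right ⟨(x : Fin k → F), rfl⟩
      set f : K →ₗ[F] LinearMap.ker (π1.comp W.subtype) :=
        LinearMap.codRestrict _
          ((LinearMap.codRestrict W (B.vecMulLinear.comp K.subtype) hmem))
          (by
            intro x
            have hx : Matrix.vecMul (x : Fin k → F) Q21 = 0 := x.2
            simp only [LinearMap.mem_ker, LinearMap.comp_apply]
            change π1 (Matrix.vecMul (x : Fin k → F) B) = 0
            rw [hπ1B]; exact hx) with hf
      have hU22inj : Function.Injective U22.vecMulLinear := by
        rw [← LinearMap.ker_eq_bot, ← Submodule.finrank_eq_zero (R := F)]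
        have h1 := LinearMap.finrank_range_add_finrank_ker U22.vecMulLinear
        have h2 : finrank F (LinearMap.range U22.vecMulLinear) = k := by
          rw [← rowSpace, ← rank_eq_finrank_rowSpace]; exact hU22
        have h3 : finrank F (Fin k → F) = k := by simp
        omega
      have hfinj : Function.Injective f := by
        intro x y hxy
        have : Matrix.vecMul (x : Fin k → F) B = Matrix.vecMul (y : Fin k → F) B := by
          have h0 : (((f x : ↥(LinearMap.ker (π1.comp W.subtype))) : W) : Fin (n1 + n2) → F) =
              (((f y : ↥(LinearMap.ker (π1.comp W.subtype))) : W) : Fin (n1 + n2) → F) := by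
            rw [hxy]
          exact h0
        have h22 : Matrix.vecMul (x : Fin k → F) U22 = Matrix.vecMul (y : Fin k → F) U22 := by
          rw [← hπ2B, ← hπ2B, this]
        have : (x : Fin k → F) = (y : Fin k → F) := by
          apply hU22inj
          simpa [Matrix.vecMulLinear_apply] using h22
        exact Subtype.ext this
      calc s ≤ finrank F K := hKdim
        _ ≤ _ := LinearMap.finrank_le_finrank_of_injective hfinj
    omega
  refine ⟨?_, main⟩
  rw [rank_eq_finrank_rowSpace, rowSpace_vcat]
  exact main
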